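/- Let τ be a Galton–Watson tree with critical offspring distribution ξ (E(ξ)=1, ξ not identically 1). Then there exists a constant c > 0 such that for all m ≥ 2, P(height(Loop(τ)) ≥ m) ≤ c/m. -/

import Mathlib

/-- A finite rooted plane tree: a root together with an ordered list of subtrees. -/
inductive PlaneTree where
  | node : List PlaneTree → PlaneTree

namespace PlaneTree

/-- The list of children (subtrees) of the root. -/
def children : PlaneTree → List PlaneTree
  | .node ts => ts

mutual
/-- The vertices of a plane tree, encoded as positions (finite sequences of child
indices), listed in depth-first-search (lexicographic) order; the root is `[]`. -/
def positions : PlaneTree → List (List ℕ)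
  | .node ts => [] :: positionsList 0 ts

def positionsList : ℕ → List PlaneTree → List (List ℕ)
  | _, [] => []
  | i, t :: ts => (positions t).map (fun p => i :: p) ++ positionsList (i + 1) ts
end

/-- The subtree rooted at a given position, if the position is present. -/
def subtree? : PlaneTree → List ℕ → Option PlaneTree
  | t, [] => some t
  | t, i :: p =>
    match t.children[i]? with
    | some c => subtree? c p
    | none => none

/-- The outdegree (number of children) of the vertex at position `v`. -/
def out (t : PlaneTree) (v : List ℕ) : ℕ :=
  match t.subtree? v with
  | some c => c.children.length
  | none => 0

/-- The Lukasiewicz path of a plane tree: `W 0 = 0` and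
`W (j+1) = W j + out(u_j) - 1`, `u_j` being the `j`-th vertex in DFS order. -/
def luka (t : PlaneTree) : ℕ → ℤ
  | 0 => 0
  | j + 1 =>
    t.luka j +
      (match t.positions[j]? with
       | some v => (t.out v : ℤ) - 1
       | none => 0)

/-- The height of the tree: the maximal distance from the root, i.e. the maximal
length of a position. -/
def height (t : PlaneTree) : ℕ := (t.positions.map List.length).foldr max 0

/-- Adjacency in the looptree of `t`: two vertices are joined if they are adjacent
siblings, or if one is the parent of the other and the child is the leftmost
(index `0`) or rightmost (index `out - 1`) child of the parent. -/
def loopAdj (t : PlaneTree) (v w : List ℕ) : Prop :=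
  v ∈ t.positions ∧ w ∈ t.positions ∧
    ((∃ u i, v = u ++ [i] ∧ w = u ++ [i + 1]) ∨
      w = v ++ [0] ∨
      w = v ++ [t.out v - 1])

/-- The looptree of `t`, as a simple graph on positions. -/
def loopGraph (t : PlaneTree) : SimpleGraph (List ℕ) :=
  SimpleGraph.fromRel (loopAdj t)

/-- The graph distance from the root in the looptree of `t`. -/
noncomputable def loopDist (t : PlaneTree) (v : List ℕ) : ℕ :=
  (loopGraph t).dist [] v

/-- The height of the looptree of `t`. -/
noncomputable def loopHeight (t : PlaneTree) : ℕ :=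
  (t.positions.map (loopDist t)).foldr max 0

end PlaneTree

namespace PlaneTree

mutual
/-- The Galton–Watson weight (probability) of a finite plane tree with offspring
distribution `π`: the product over all vertices `v` of `π (out v)`. -/
noncomputable def gwWeight (π : ℕ → ENNReal) : PlaneTree → ENNReal
  | .node ts => π ts.length * gwWeightList π ts

noncomputable def gwWeightList (π : ℕ → ENNReal) : List PlaneTree → ENNReal
  | [] => 1
  | t :: ts => gwWeight π t * gwWeightList π ts
end

end PlaneTree

section Comb
namespace PlaneTree

/-- Sum of "right-sibling counts" along a path (the Lukasiewicz value of a vertex). -/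
def wval : List ℕ → PlaneTree → ℕ
  | [], _ => 0
  | i :: p, t =>
    (t.children.length - 1 - i) +
      (match t.children[i]? with
       | some c => wval p c
       | none => 0)

/-- All positions have length `< n`. -/
def heightLt (n : ℕ) (t : PlaneTree) : Prop := ∀ v ∈ t.positions, v.length < n

/-- All positions have `wval < k`. -/
def wLt (k : ℕ) (t : PlaneTree) : Prop := ∀ v ∈ t.positions, wval v t < k

@[simp] lemma children_node (ts : List PlaneTree) : (node ts).children = ts := rfl

lemma node_children (t : PlaneTree) : node t.children = t := by cases t; rfl

@[simp] lemma positions_node (ts : List PlaneTree) :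
    (node ts).positions = [] :: positionsList 0 ts := rfl

lemma mem_positionsList {ts : List PlaneTree} {i : ℕ} {v : List ℕ} :
    v ∈ positionsList i ts ↔
      ∃ j p c, v = (i + j) :: p ∧ ts[j]? = some c ∧ p ∈ c.positions := by
  induction ts generalizing i with
  | nil => simp [positionsList]
  | cons t ts ih =>
    simp only [positionsList, List.mem_append, List.mem_map, ih]
    constructor
    · rintro (⟨p, hp, rfl⟩ | ⟨j, p, c, rfl, hg, hp⟩)
      · exact ⟨0, p, t, by simp, by simp, hp⟩
      · refine ⟨j + 1, p, c, by rw [Nat.add_assoc, Nat.add_comm 1 j], by simpa using hg, hp⟩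
    · rintro ⟨j, p, c, rfl, hg, hp⟩
      cases j with
      | zero =>
        left
        simp only [List.getElem?_cons_zero] at hg
        cases hg
        exact ⟨p, hp, by simp⟩
      | succ j =>
        right
        exact ⟨j, p, c, by rw [Nat.add_assoc, Nat.add_comm 1 j], by simpa using hg, hp⟩

lemma mem_positions_node {ts : List PlaneTree} {v : List ℕ} :
    v ∈ (node ts).positions ↔
      v = [] ∨ ∃ j p c, v = j :: p ∧ ts[j]? = some c ∧ p ∈ c.positions := by
  simp only [positions_node, List.mem_cons, mem_positionsList, Nat.zero_add]

lemma nil_mem_positions (t : PlaneTree) : [] ∈ t.positions := by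
  cases t with
  | node ts => simp [mem_positions_node]

lemma cons_mem_positions {ts : List PlaneTree} {j : ℕ} {p : List ℕ} {c : PlaneTree}
    (hg : ts[j]? = some c) (hp : p ∈ c.positions) :
    j :: p ∈ (node ts).positions :=
  mem_positions_node.2 (Or.inr ⟨j, p, c, rfl, hg, hp⟩)


@[simp] lemma subtree?_nil (t : PlaneTree) : t.subtree? [] = some t := rfl

@[simp] lemma out_nil_node (ts : List PlaneTree) : (node ts).out [] = ts.length := rfl

lemma subtree?_cons {ts : List PlaneTree} {j : ℕ} {c : PlaneTree} (hg : ts[j]? = some c)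
    (p : List ℕ) : (node ts).subtree? (j :: p) = c.subtree? p := by
  have hg' : ts[j]? = some c := by exact hg
  simp [subtree?, hg']

lemma out_cons {ts : List PlaneTree} {j : ℕ} {c : PlaneTree} (hg : ts[j]? = some c)
    (p : List ℕ) : (node ts).out (j :: p) = c.out p := by
  simp [out, subtree?_cons hg]

lemma wval_cons {ts : List PlaneTree} {j : ℕ} {c : PlaneTree} (hg : ts[j]? = some c)
    (p : List ℕ) : wval (j :: p) (node ts) = (ts.length - 1 - j) + wval p c := by
  have hg' : ts[j]? = some c := by exact hg
  simp [wval, hg']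

open SimpleGraph in
lemma loopGraph_adj {t : PlaneTree} {v w : List ℕ} (h : loopAdj t v w) (hne : v ≠ w) :
    (loopGraph t).Adj v w := by
  rw [loopGraph, SimpleGraph.fromRel_adj]
  exact ⟨hne, Or.inl h⟩

lemma singleton_mem_positions {ts : List PlaneTree} {j : ℕ} (hj : j < ts.length) :
    [j] ∈ (node ts).positions := by
  exact cons_mem_positions (List.getElem?_eq_getElem hj) (nil_mem_positions _)

lemma adj_root_rightmost {ts : List PlaneTree} (hts : ts ≠ []) :
    (loopGraph (node ts)).Adj [] [ts.length - 1] := by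
  apply loopGraph_adj
  · refine ⟨nil_mem_positions _, singleton_mem_positions ?_, Or.inr (Or.inr ?_)⟩
    · have := List.length_pos_iff.2 hts; omega
    · simp
  · simp

lemma adj_sibling {ts : List PlaneTree} {j : ℕ} (h1 : j + 1 < ts.length) :
    (loopGraph (node ts)).Adj [j + 1] [j] := by
  apply SimpleGraph.adj_symm
  apply loopGraph_adj
  · exact ⟨singleton_mem_positions (by omega), singleton_mem_positions h1,
      Or.inl ⟨[], j, by simp, by simp⟩⟩
  · simp

/-- Walk from `[j + d]` down to `[j]` by sibling steps. -/
noncomputable def walkDown (ts : List PlaneTree) (j : ℕ) :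
    (d : ℕ) → (j + d < ts.length) → (loopGraph (node ts)).Walk [j + d] [j]
  | 0, _ => SimpleGraph.Walk.nil
  | d + 1, h =>
    SimpleGraph.Walk.cons (adj_sibling h) (walkDown ts j d (Nat.lt_of_succ_lt h))

lemma walkDown_length (ts : List PlaneTree) (j d : ℕ) (h : j + d < ts.length) :
    (walkDown ts j d h).length = d := by
  induction d with
  | zero => rfl
  | succ d ih => simp [walkDown, ih]

open SimpleGraph in
/-- The graph homomorphism from the looptree of a child into the looptree of the parent. -/
def consHom {ts : List PlaneTree} {j : ℕ} {c : PlaneTree} (hg : ts[j]? = some c) :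
    loopGraph c →g loopGraph (node ts) where
  toFun := fun v => j :: v
  map_rel' := by
    intro u w hadj
    rw [loopGraph, SimpleGraph.fromRel_adj] at hadj ⊢
    obtain ⟨hne, hrel⟩ := hadj
    refine ⟨by simpa using hne, ?_⟩
    have lift : ∀ a b : List ℕ, loopAdj c a b → loopAdj (node ts) (j :: a) (j :: b) := by
      rintro a b ⟨ha, hb, hd⟩
      refine ⟨cons_mem_positions hg ha, cons_mem_positions hg hb, ?_⟩
      rcases hd with ⟨u', i, rfl, rfl⟩ | rfl | rfl
      · exact Or.inl ⟨j :: u', i, rfl, rfl⟩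
      · exact Or.inr (Or.inl rfl)
      · exact Or.inr (Or.inr (by rw [out_cons hg]; rfl))
    rcases hrel with h | h
    · exact Or.inl (lift _ _ h)
    · exact Or.inr (lift _ _ h)

lemma exists_walk : ∀ (v : List ℕ) (t : PlaneTree), v ∈ t.positions →
    ∃ w : (loopGraph t).Walk [] v, w.length ≤ v.length + wval v t := by
  intro v
  induction v with
  | nil => exact fun t _ => ⟨SimpleGraph.Walk.nil, by simp [wval]⟩
  | cons j p ih =>
    intro t hv
    obtain ⟨ts, rfl⟩ : ∃ ts, t = node ts := ⟨t.children, (node_children t).symm⟩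
    rcases mem_positions_node.1 hv with h | ⟨j', p', c, heq, hg, hp⟩
    · exact absurd h (by simp)
    obtain ⟨rfl, rfl⟩ : j = j' ∧ p = p' := by
      constructor <;> [exact (List.cons.injEq _ _ _ _ ▸ heq).1;
        exact (List.cons.injEq _ _ _ _ ▸ heq).2]
    obtain ⟨w', hw'⟩ := ih c hp
    have hj : j < ts.length := List.getElem?_eq_some_iff.1 hg |>.1
    have hts : ts ≠ [] := by rintro rfl; simp at hj
    -- walk: root → rightmost child → ... → [j], then into the subtree
    have hd : j + (ts.length - 1 - j) < ts.length := by omega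
    let w1 : (loopGraph (node ts)).Walk [] [j] :=
      SimpleGraph.Walk.cons (adj_root_rightmost hts)
        ((walkDown ts j (ts.length - 1 - j) hd).copy (by congr 1; omega) rfl)
    let w2 : (loopGraph (node ts)).Walk [j] (j :: p) := w'.map (consHom hg)
    refine ⟨w1.append w2, ?_⟩
    have hlen2 : w2.length = w'.length := SimpleGraph.Walk.length_map _ _
    have hlen1 : w1.length = 1 + (ts.length - 1 - j) := by
      simp only [w1, SimpleGraph.Walk.length_cons, SimpleGraph.Walk.length_copy,
        walkDown_length]
      omega
    rw [SimpleGraph.Walk.length_append, wval_cons hg]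
    simp only [List.length_cons]
    omega

lemma loopDist_le {t : PlaneTree} {v : List ℕ} (hv : v ∈ t.positions) :
    loopDist t v ≤ v.length + wval v t := by
  obtain ⟨w, hw⟩ := exists_walk v t hv
  exact le_trans (SimpleGraph.dist_le w) hw

lemma exists_of_le_foldr_max {m : ℕ} (hm : 0 < m) :
    ∀ l : List ℕ, m ≤ l.foldr max 0 → ∃ x ∈ l, m ≤ x := by
  intro l
  induction l with
  | nil => intro h; simp at h; omega
  | cons a l ih =>
    intro h
    simp only [List.foldr_cons] at h
    rcases le_max_iff.1 h with h | h
    · exact ⟨a, List.mem_cons_self, h⟩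
    · obtain ⟨x, hx, hxm⟩ := ih h
      exact ⟨x, List.mem_cons_of_mem _ hx, hxm⟩

/-- The main deterministic bound: if the looptree height is at least `m`, then either
the tree height or the maximal Lukasiewicz value is at least `m / 2`. -/
lemma loopHeight_large {t : PlaneTree} {m : ℕ} (hm : 2 ≤ m) (h : m ≤ loopHeight t) :
    ¬ heightLt (m / 2) t ∨ ¬ wLt (m / 2) t := by
  by_contra hc
  push_neg at hc
  obtain ⟨hh, hw⟩ := hc
  obtain ⟨x, hx, hxm⟩ := exists_of_le_foldr_max (by omega) _ h
  obtain ⟨v, hv, rfl⟩ := List.mem_map.1 hx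
  have h1 := loopDist_le hv
  have h2 := hh v hv
  have h3 := hw v hv
  omega

lemma not_heightLt_zero (t : PlaneTree) : ¬ heightLt 0 t :=
  fun h => by simpa using h [] (nil_mem_positions t)

lemma not_wLt_zero (t : PlaneTree) : ¬ wLt 0 t :=
  fun h => by simpa using h [] (nil_mem_positions t)

lemma heightLt_node_iff {n : ℕ} {ts : List PlaneTree} :
    heightLt (n + 1) (node ts) ↔ ∀ (j : ℕ) c, ts[j]? = some c → heightLt n c := by
  constructor
  · intro h j c hg p hp
    have := h (j :: p) (cons_mem_positions hg hp)
    simpa using this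
  · intro h v hv
    rcases mem_positions_node.1 hv with rfl | ⟨j, p, c, rfl, hg, hp⟩
    · simp
    · have := h j c hg p hp
      simp only [List.length_cons]
      omega

lemma wLt_node_iff {k : ℕ} (hk : 0 < k) {ts : List PlaneTree} :
    wLt k (node ts) ↔ ∀ (j : ℕ) c, ts[j]? = some c → wLt (k - (ts.length - 1 - j)) c := by
  constructor
  · intro h j c hg p hp
    have := h (j :: p) (cons_mem_positions hg hp)
    rw [wval_cons hg] at this
    omega
  · intro h v hv
    rcases mem_positions_node.1 hv with rfl | ⟨j, p, c, rfl, hg, hp⟩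
    · simpa [wval] using hk
    · have h2 := h j c hg p hp
      rw [wval_cons hg]
      omega

lemma le_foldr_max {x : ℕ} : ∀ {l : List ℕ}, x ∈ l → x ≤ l.foldr max 0 := by
  intro l
  induction l with
  | nil => intro h; simp at h
  | cons a l ih =>
    intro h
    rcases List.mem_cons.1 h with rfl | h'
    · exact le_max_left _ _
    · exact le_trans (ih h') (le_max_right _ _)

/-- A height bound for each tree. -/
lemma exists_heightLt (t : PlaneTree) : ∃ n, heightLt n t := by
  refine ⟨(t.positions.map List.length).foldr max 0 + 1, fun v hv => ?_⟩
  have : v.length ≤ (t.positions.map List.length).foldr max 0 :=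
    le_foldr_max (List.mem_map.2 ⟨v, hv, rfl⟩)
  omega

lemma heightLt_mono {n n' : ℕ} (h : n ≤ n') {t : PlaneTree} (ht : heightLt n t) :
    heightLt n' t := fun v hv => lt_of_lt_of_le (ht v hv) h

/-- An injective code for plane trees, for countability. -/
def code : PlaneTree → ℕ
  | node ts => Nat.pair ts.length (Encodable.encode (ts.attach.map fun c => code c.1))
decreasing_by
  have h1 := List.sizeOf_lt_of_mem c.2
  have h2 : sizeOf (node ts) = 1 + sizeOf ts := by simp
  omega

lemma code_inj_aux : ∀ (n : ℕ) (t t' : PlaneTree), sizeOf t ≤ n → code t = code t' → t = t' := by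
  intro n
  induction n with
  | zero =>
    intro t
    cases t with
    | node ts => intro _ hs; exact absurd hs (by simp)
  | succ n ihn =>
    intro t t' hsz h
    obtain ⟨ts, rfl⟩ : ∃ ts, t = node ts := ⟨t.children, (node_children t).symm⟩
    have ih : ∀ c ∈ ts, ∀ c', code c = code c' → c = c' := by
      intro c hc c' hcc
      refine ihn c c' ?_ hcc
      have h1 := List.sizeOf_lt_of_mem hc
      have h2 : sizeOf (node ts) = 1 + sizeOf ts := by simp
      omega
    obtain ⟨ss, rfl⟩ : ∃ ss, t' = node ss := ⟨t'.children, (node_children t').symm⟩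
    rw [code, code] at h
    have h1 : ts.length = ss.length := by
      have := congrArg (fun x => x.unpair.1) h
      simpa using this
    have h2 : ts.attach.map (fun c => code c.1) = ss.attach.map (fun c => code c.1) := by
      have := congrArg (fun x => x.unpair.2) h
      simp only [Nat.unpair_pair] at this
      exact Encodable.encode_injective this
    congr 1
    have hlen : (ts.attach.map fun c => code c.1).length = ts.length := by simp
    apply List.ext_get h1
    intro i hi hi'
    have := congrArg (fun l => l[i]?) h2
    simp only [List.getElem?_map] at this
    have hts : ts.attach[i]? = some ⟨ts.get ⟨i, hi⟩, List.get_mem _ _⟩ := by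
      rw [List.getElem?_eq_getElem (by simpa using hi)]
      simp [List.getElem_attach]
    have hss : ss.attach[i]? = some ⟨ss.get ⟨i, hi'⟩, List.get_mem _ _⟩ := by
      rw [List.getElem?_eq_getElem (by simpa using hi')]
      simp [List.getElem_attach]
    rw [hts, hss] at this
    simp only [Option.map_some] at this
    exact ih _ (List.get_mem _ _) _ (Option.some.injEq _ _ ▸ this)

lemma code_injective : Function.Injective code := fun t t' h =>
  code_inj_aux (sizeOf t) t t' le_rfl h

instance : Countable PlaneTree := ⟨code, code_injective⟩

end PlaneTree
end Comb

section TsumMachinery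
namespace PlaneTree

open scoped ENNReal

/-- Trees are in bijection with lists of trees via `node`. -/
def nodeEquiv : List PlaneTree ≃ PlaneTree where
  toFun := node
  invFun := children
  left_inv := fun ts => rfl
  right_inv := node_children

lemma gwWeightList_eq (π : ℕ → ℝ≥0∞) :
    ∀ ts : List PlaneTree, gwWeightList π ts = (ts.map (gwWeight π)).prod := by
  intro ts
  induction ts with
  | nil => simp [gwWeightList]
  | cons t ts ih => rw [gwWeightList, ih]; simp

lemma gwWeight_ofFn (π : ℕ → ℝ≥0∞) {n : ℕ} (f : Fin n → PlaneTree) :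
    gwWeight π (node (List.ofFn f)) = π n * ∏ j : Fin n, gwWeight π (f j) := by
  rw [gwWeight, gwWeightList_eq, List.map_ofFn, List.prod_ofFn, List.length_ofFn]
  rfl

/-- The sum of a product over tuples equals a product of sums, in `ℝ≥0∞`. -/
lemma tsum_prod_fin {X : Type*} :
    ∀ (n : ℕ) (A : Fin n → X → ℝ≥0∞),
      ∑' f : Fin n → X, ∏ j : Fin n, A j (f j) = ∏ j : Fin n, ∑' x : X, A j x := by
  intro n
  induction n with
  | zero =>
    intro A
    rw [Finset.univ_eq_empty, Finset.prod_empty]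
    rw [tsum_congr (g := fun _ : Fin 0 → X => (1 : ℝ≥0∞))
      (fun f => by simp)]
    exact tsum_eq_single (fun i => i.elim0) (fun f' hf' =>
      absurd (funext fun i => i.elim0) hf')
  | succ n ih =>
    intro A
    rw [← Equiv.tsum_eq (Fin.consEquiv (fun _ => X)) (fun f => ∏ j : Fin (n + 1), A j (f j))]
    have hterm : ∀ p : X × (Fin n → X),
        (∏ j : Fin (n + 1), A j ((Fin.consEquiv (fun _ => X)) p j))
          = A 0 p.1 * ∏ j : Fin n, A j.succ (p.2 j) := by
      intro p
      rw [Fin.prod_univ_succ]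
      simp [Fin.consEquiv]
    simp only [hterm]
    rw [ENNReal.tsum_prod']
    simp only [ENNReal.tsum_mul_left]
    rw [ENNReal.tsum_mul_right, ih (fun j => A j.succ), Fin.prod_univ_succ]

/-- Decomposition of a tree sum according to the root degree. -/
lemma tsum_node_decomp (π : ℕ → ℝ≥0∞) (F : PlaneTree → ℝ≥0∞) (G : ℕ → ℕ → PlaneTree → ℝ≥0∞)
    (hF : ∀ (n : ℕ) (f : Fin n → PlaneTree),
      F (node (List.ofFn f)) = π n * ∏ j : Fin n, G n j (f j)) :
    ∑' t : PlaneTree, F t = ∑' n : ℕ, π n * ∏ j ∈ Finset.range n, ∑' t : PlaneTree, G n j t := by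
  rw [← Equiv.tsum_eq nodeEquiv F]
  rw [show (nodeEquiv : List PlaneTree → PlaneTree) = node from rfl]
  rw [← Equiv.tsum_eq (List.equivSigmaTuple (α := PlaneTree)).symm (fun ts => F (node ts))]
  have he2 : ∀ p : Σ n : ℕ, Fin n → PlaneTree,
      (List.equivSigmaTuple (α := PlaneTree)).symm p = List.ofFn p.2 := fun p => by
    rcases p with ⟨n, f⟩
    simp [List.equivSigmaTuple]
  simp only [he2]
  rw [ENNReal.tsum_sigma (fun n f => F (node (List.ofFn f)))]
  congr 1
  funext n
  simp only [hF]
  rw [ENNReal.tsum_mul_left, tsum_prod_fin n (fun j t => G n j t)]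
  congr 1
  exact Fin.prod_univ_eq_prod_range (fun j => ∑' t : PlaneTree, G n j t) n

end PlaneTree
end TsumMachinery

section GW
namespace PlaneTree

open scoped ENNReal Classical

variable (π : ℕ → ℝ≥0∞)

/-- Weight restricted to trees of height `< n`. -/
noncomputable def hfun (n : ℕ) (t : PlaneTree) : ℝ≥0∞ :=
  if heightLt n t then gwWeight π t else 0

noncomputable def hseq (n : ℕ) : ℝ≥0∞ := ∑' t : PlaneTree, hfun π n t

/-- Weight restricted to trees of height `< n` with all Lukasiewicz values `< k`. -/
noncomputable def qfun (n k : ℕ) (t : PlaneTree) : ℝ≥0∞ :=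
  if heightLt n t ∧ wLt k t then gwWeight π t else 0

noncomputable def qseq (n k : ℕ) : ℝ≥0∞ := ∑' t : PlaneTree, qfun π n k t

lemma get?_ofFn_iff {n : ℕ} (f : Fin n → PlaneTree) (j : ℕ) (c : PlaneTree) :
    (List.ofFn f)[j]? = some c ↔ ∃ h : j < n, f ⟨j, h⟩ = c := by
  rw [List.getElem?_eq_some_iff]
  simp

lemma hfun_ofFn (n : ℕ) {ℓ : ℕ} (f : Fin ℓ → PlaneTree) :
    hfun π (n + 1) (node (List.ofFn f)) = π ℓ * ∏ j : Fin ℓ, hfun π n (f j) := by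
  have hiff : heightLt (n + 1) (node (List.ofFn f)) ↔ ∀ j : Fin ℓ, heightLt n (f j) := by
    rw [heightLt_node_iff]
    constructor
    · intro h j
      exact h j (f j) ((get?_ofFn_iff f j (f j)).2 ⟨j.2, by rw [Fin.eta]⟩)
    · rintro h j c hg
      obtain ⟨hj, rfl⟩ := (get?_ofFn_iff f j c).1 hg
      exact h _
  by_cases h : ∀ j : Fin ℓ, heightLt n (f j)
  · rw [hfun, if_pos (hiff.2 h), gwWeight_ofFn]
    congr 1
    exact Finset.prod_congr rfl fun j _ => by rw [hfun, if_pos (h j)]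
  · rw [hfun, if_neg (fun hc => h (hiff.1 hc))]
    push_neg at h
    obtain ⟨j, hj⟩ := h
    rw [Finset.prod_eq_zero (Finset.mem_univ j)
      (show hfun π n (f j) = 0 by rw [hfun, if_neg hj]), mul_zero]

lemma hseq_succ (n : ℕ) : hseq π (n + 1) = ∑' ℓ : ℕ, π ℓ * hseq π n ^ ℓ := by
  rw [hseq, tsum_node_decomp π (hfun π (n + 1)) (fun _ _ t => hfun π n t)
    (fun ℓ f => hfun_ofFn π n f)]
  exact tsum_congr fun ℓ => by rw [Finset.prod_const, Finset.card_range]; rfl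

lemma qfun_ofFn (n k : ℕ) (hk : 0 < k) {ℓ : ℕ} (f : Fin ℓ → PlaneTree) :
    qfun π (n + 1) k (node (List.ofFn f)) =
      π ℓ * ∏ j : Fin ℓ, qfun π n (k - (ℓ - 1 - (j : ℕ))) (f j) := by
  have hlen : (List.ofFn f).length = ℓ := List.length_ofFn
  have hiff : (heightLt (n + 1) (node (List.ofFn f)) ∧ wLt k (node (List.ofFn f))) ↔
      ∀ j : Fin ℓ, heightLt n (f j) ∧ wLt (k - (ℓ - 1 - (j : ℕ))) (f j) := by
    rw [heightLt_node_iff, wLt_node_iff hk]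
    constructor
    · rintro ⟨h1, h2⟩ j
      have hg : (List.ofFn f)[(j : ℕ)]? = some (f j) :=
        (get?_ofFn_iff f j (f j)).2 ⟨j.2, by rw [Fin.eta]⟩
      refine ⟨h1 j (f j) hg, ?_⟩
      have := h2 j (f j) hg
      rwa [hlen] at this
    · rintro h
      constructor
      · intro j c hg
        obtain ⟨hj, rfl⟩ := (get?_ofFn_iff f j c).1 hg
        exact (h _).1
      · intro j c hg
        obtain ⟨hj, rfl⟩ := (get?_ofFn_iff f j c).1 hg
        rw [hlen]
        exact (h ⟨j, hj⟩).2
  by_cases h : ∀ j : Fin ℓ, heightLt n (f j) ∧ wLt (k - (ℓ - 1 - (j : ℕ))) (f j)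
  · rw [qfun, if_pos (hiff.2 h), gwWeight_ofFn]
    congr 1
    exact Finset.prod_congr rfl fun j _ => by rw [qfun, if_pos (h j)]
  · rw [qfun, if_neg (fun hc => h (hiff.1 hc))]
    push_neg at h
    rcases h with ⟨j, hj⟩
    rw [Finset.prod_eq_zero (Finset.mem_univ j)
      (show qfun π n (k - (ℓ - 1 - (j : ℕ))) (f j) = 0 by
        rw [qfun, if_neg (fun hc => hj hc.1 hc.2)]), mul_zero]

lemma qseq_succ (n k : ℕ) (hk : 0 < k) :
    qseq π (n + 1) k = ∑' ℓ : ℕ, π ℓ * ∏ j ∈ Finset.range ℓ, qseq π n (k - j) := by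
  rw [qseq, tsum_node_decomp π (qfun π (n + 1) k) (fun ℓ j t => qfun π n (k - (ℓ - 1 - j)) t)
    (fun ℓ f => qfun_ofFn π n k hk f)]
  refine tsum_congr fun ℓ => ?_
  congr 1
  have hq : ∀ x, (∑' t, qfun π n (k - x) t) = qseq π n (k - x) := fun x => rfl
  simp only [hq]
  exact Finset.prod_range_reflect (fun x => qseq π n (k - x)) ℓ

@[simp] lemma hseq_zero : hseq π 0 = 0 := by
  rw [hseq, ENNReal.tsum_eq_zero]
  intro t
  rw [hfun, if_neg (not_heightLt_zero t)]

@[simp] lemma qseq_k_zero (n : ℕ) : qseq π n 0 = 0 := by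
  rw [qseq, ENNReal.tsum_eq_zero]
  intro t
  rw [qfun, if_neg (fun h => not_wLt_zero t h.2)]

lemma hseq_le_one (hsum : ∑' i : ℕ, π i = 1) : ∀ n, hseq π n ≤ 1 := by
  intro n
  induction n with
  | zero => simp
  | succ n ih =>
    rw [hseq_succ]
    calc ∑' ℓ : ℕ, π ℓ * hseq π n ^ ℓ ≤ ∑' ℓ : ℕ, π ℓ := by
          exact ENNReal.tsum_le_tsum fun ℓ => by
            calc π ℓ * hseq π n ^ ℓ ≤ π ℓ * 1 :=
                  mul_le_mul_right (pow_le_one' ih ℓ) _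
            _ = π ℓ := mul_one _
      _ = 1 := hsum

lemma hseq_mono {n n' : ℕ} (h : n ≤ n') : hseq π n ≤ hseq π n' :=
  ENNReal.tsum_le_tsum fun t => by
    rw [hfun, hfun]
    split
    · rw [if_pos (heightLt_mono h (by assumption))]
    · exact zero_le

lemma qseq_le_hseq (n k : ℕ) : qseq π n k ≤ hseq π n :=
  ENNReal.tsum_le_tsum fun t => by
    rw [qfun, hfun]
    split
    · rw [if_pos (by tauto)]
    · exact zero_le

lemma hseq_le_Z (n : ℕ) : hseq π n ≤ ∑' t : PlaneTree, gwWeight π t :=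
  ENNReal.tsum_le_tsum fun t => by
    rw [hfun]; split
    · exact le_rfl
    · exact zero_le

lemma Z_le_iSup_hseq : ∑' t : PlaneTree, gwWeight π t ≤ ⨆ n, hseq π n := by
  rw [ENNReal.tsum_eq_iSup_sum]
  refine iSup_le fun s => ?_
  set N : ℕ := s.sup fun t => Classical.choose (exists_heightLt t) with hN
  have hsum_le : ∑ t ∈ s, gwWeight π t ≤ hseq π N := by
    have : ∀ t ∈ s, gwWeight π t = hfun π N t := by
      intro t ht
      rw [hfun, if_pos (heightLt_mono (Finset.le_sup ht)
        (Classical.choose_spec (exists_heightLt t)))]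
    rw [Finset.sum_congr rfl this]
    exact ENNReal.sum_le_tsum s
  exact le_trans hsum_le (le_iSup _ N)

lemma iSup_hseq_eq_Z : (⨆ n, hseq π n) = ∑' t : PlaneTree, gwWeight π t :=
  le_antisymm (iSup_le fun n => hseq_le_Z π n) (Z_le_iSup_hseq π)

end PlaneTree
end GW

section Analysis
namespace PlaneTree

open scoped ENNReal Classical

variable (π : ℕ → ℝ≥0∞)

lemma pi_le_one (hsum : ∑' i : ℕ, π i = 1) (i : ℕ) : π i ≤ 1 :=
  hsum ▸ ENNReal.le_tsum i

lemma tail_ne_top (hsum : ∑' i : ℕ, π i = 1) (m : ℕ) : ∑' ℓ : ℕ, π (ℓ + m) ≠ ⊤ := by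
  refine ne_top_of_le_ne_top ENNReal.one_ne_top ?_
  calc ∑' ℓ : ℕ, π (ℓ + m) ≤ ∑' ℓ : ℕ, π ℓ :=
        ENNReal.tsum_comp_le_tsum_of_injective (add_left_injective m) π
    _ = 1 := hsum

lemma hsum_shift (hsum : ∑' i : ℕ, π i = 1) : π 0 + ∑' ℓ : ℕ, π (ℓ + 1) = 1 :=
  (tsum_eq_zero_add' (f := π) ENNReal.summable).symm.trans hsum

lemma S1_eq (hsum : ∑' i : ℕ, π i = 1) (hmean : ∑' i : ℕ, (i : ℝ≥0∞) * π i = 1) :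
    ∑' ℓ : ℕ, (ℓ : ℝ≥0∞) * π (ℓ + 1) = π 0 := by
  have h1 : (1 : ℝ≥0∞) = ∑' ℓ : ℕ, ((ℓ : ℝ≥0∞) + 1) * π (ℓ + 1) := by
    conv_lhs => rw [← hmean]
    rw [tsum_eq_zero_add' (f := fun i : ℕ => (i : ℝ≥0∞) * π i) ENNReal.summable,
      Nat.cast_zero, zero_mul, zero_add]
    exact tsum_congr fun ℓ => by push_cast; ring
  have h2 : ∑' ℓ : ℕ, ((ℓ : ℝ≥0∞) + 1) * π (ℓ + 1) =
      (∑' ℓ : ℕ, (ℓ : ℝ≥0∞) * π (ℓ + 1)) + ∑' ℓ : ℕ, π (ℓ + 1) := by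
    rw [← ENNReal.tsum_add]
    exact tsum_congr fun ℓ => by ring
  have h3 := hsum_shift π hsum
  have hT := tail_ne_top π hsum 1
  have key : (∑' ℓ : ℕ, π (ℓ + 1)) + (∑' ℓ : ℕ, (ℓ : ℝ≥0∞) * π (ℓ + 1)) =
      (∑' ℓ : ℕ, π (ℓ + 1)) + π 0 :=
    calc (∑' ℓ : ℕ, π (ℓ + 1)) + (∑' ℓ : ℕ, (ℓ : ℝ≥0∞) * π (ℓ + 1))
        = (∑' ℓ : ℕ, (ℓ : ℝ≥0∞) * π (ℓ + 1)) + ∑' ℓ : ℕ, π (ℓ + 1) := add_comm _ _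
      _ = ∑' ℓ : ℕ, ((ℓ : ℝ≥0∞) + 1) * π (ℓ + 1) := h2.symm
      _ = 1 := h1.symm
      _ = π 0 + ∑' ℓ : ℕ, π (ℓ + 1) := h3.symm
      _ = (∑' ℓ : ℕ, π (ℓ + 1)) + π 0 := add_comm _ _
  exact (ENNReal.add_right_inj hT).1 key

lemma S2_eq (hmean : ∑' i : ℕ, (i : ℝ≥0∞) * π i = 1) :
    π 1 + ∑' ℓ : ℕ, ((ℓ : ℝ≥0∞) + 2) * π (ℓ + 2) = 1 := by
  have ha : ∑' i : ℕ, (i : ℝ≥0∞) * π i = ∑' ℓ : ℕ, ((ℓ : ℝ≥0∞) + 1) * π (ℓ + 1) := by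
    rw [tsum_eq_zero_add' (f := fun i : ℕ => (i : ℝ≥0∞) * π i) ENNReal.summable,
      Nat.cast_zero, zero_mul, zero_add]
    exact tsum_congr fun ℓ => by push_cast; ring
  have hb : ∑' ℓ : ℕ, ((ℓ : ℝ≥0∞) + 1) * π (ℓ + 1)
      = π 1 + ∑' ℓ : ℕ, ((ℓ : ℝ≥0∞) + 2) * π (ℓ + 2) := by
    rw [tsum_eq_zero_add' (f := fun ℓ : ℕ => ((ℓ : ℝ≥0∞) + 1) * π (ℓ + 1)) ENNReal.summable,
      Nat.cast_zero, zero_add, one_mul]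
    congr 1
    exact tsum_congr fun ℓ => by push_cast; ring
  conv_rhs => rw [← hmean, ha, hb]

/-- The mass of offspring numbers `≥ 2`. -/
noncomputable def delta : ℝ≥0∞ := ∑' ℓ : ℕ, π (ℓ + 2)

lemma delta_le_one (hsum : ∑' i : ℕ, π i = 1) : delta π ≤ 1 := by
  calc delta π ≤ ∑' ℓ : ℕ, π ℓ :=
        ENNReal.tsum_comp_le_tsum_of_injective (add_left_injective 2) π
    _ = 1 := hsum

lemma delta_pos (hmean : ∑' i : ℕ, (i : ℝ≥0∞) * π i = 1) (hnotone : π 1 < 1) :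
    0 < delta π := by
  rcases eq_or_lt_of_le (show 0 ≤ delta π from zero_le) with h | h
  · exfalso
    have hz : ∀ ℓ, π (ℓ + 2) = 0 := fun ℓ => ENNReal.tsum_eq_zero.1 h.symm ℓ
    have := S2_eq π hmean
    rw [tsum_congr (fun ℓ => by rw [hz ℓ, mul_zero]), tsum_zero, add_zero] at this
    exact absurd this (ne_of_lt hnotone)
  · exact h

/-- The key comparison `A ≥ k·B` for the gambler's-ruin induction. -/
lemma A_ge_kB (hsum : ∑' i : ℕ, π i = 1) (hmean : ∑' i : ℕ, (i : ℝ≥0∞) * π i = 1)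
    {h : ℝ≥0∞} (hh : h ≤ 1) (k : ℕ) :
    (k : ℝ≥0∞) * ∑' ℓ : ℕ, π ℓ * h ^ ℓ ≤
      ∑' ℓ : ℕ, π ℓ * (h ^ ℓ * (((k + 1) - ℓ : ℕ) : ℝ≥0∞)) := by
  set B := ∑' ℓ : ℕ, π ℓ * h ^ ℓ with hB
  set A := ∑' ℓ : ℕ, π ℓ * (h ^ ℓ * (((k + 1) - ℓ : ℕ) : ℝ≥0∞)) with hA
  set C := ∑' ℓ : ℕ, π ℓ * (h ^ ℓ * ((min ℓ (k + 1) : ℕ) : ℝ≥0∞)) with hC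
  have hBle : B ≤ 1 := by
    rw [hB, ← hsum]
    exact ENNReal.tsum_le_tsum fun ℓ => by
      calc π ℓ * h ^ ℓ ≤ π ℓ * 1 := mul_le_mul_right (pow_le_one' hh ℓ) _
        _ = π ℓ := mul_one _
  have hCB : C ≤ B := by
    have hC' : C = π 0 * (h ^ 0 * ((min 0 (k + 1) : ℕ) : ℝ≥0∞)) +
        ∑' ℓ : ℕ, π (ℓ + 1) * (h ^ (ℓ + 1) * ((min (ℓ + 1) (k + 1) : ℕ) : ℝ≥0∞)) :=
      tsum_eq_zero_add' ENNReal.summable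
    have hB' : B = π 0 + ∑' ℓ : ℕ, π (ℓ + 1) * h ^ (ℓ + 1) := by
      rw [hB, tsum_eq_zero_add' (f := fun ℓ : ℕ => π ℓ * h ^ ℓ) ENNReal.summable,
        pow_zero, mul_one]
    rw [hC', hB']
    simp only [Nat.min_def, pow_zero, one_mul]
    rw [if_pos (Nat.zero_le _), Nat.cast_zero, mul_zero, zero_add]
    calc ∑' ℓ : ℕ, π (ℓ + 1) * (h ^ (ℓ + 1) * ((min (ℓ + 1) (k + 1) : ℕ) : ℝ≥0∞))
        ≤ ∑' ℓ : ℕ, (π (ℓ + 1) * h ^ (ℓ + 1) + (ℓ : ℝ≥0∞) * π (ℓ + 1)) := by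
          refine ENNReal.tsum_le_tsum fun ℓ => ?_
          have h1 : ((min (ℓ + 1) (k + 1) : ℕ) : ℝ≥0∞) ≤ (ℓ : ℝ≥0∞) + 1 := by
            have : (min (ℓ + 1) (k + 1) : ℕ) ≤ ℓ + 1 := min_le_left _ _
            calc ((min (ℓ + 1) (k + 1) : ℕ) : ℝ≥0∞) ≤ ((ℓ + 1 : ℕ) : ℝ≥0∞) :=
                  Nat.cast_le.2 this
              _ = (ℓ : ℝ≥0∞) + 1 := by push_cast; ring
          calc π (ℓ + 1) * (h ^ (ℓ + 1) * ((min (ℓ + 1) (k + 1) : ℕ) : ℝ≥0∞))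
              ≤ π (ℓ + 1) * (h ^ (ℓ + 1) * ((ℓ : ℝ≥0∞) + 1)) :=
                mul_le_mul_right (mul_le_mul_right h1 _) _
            _ = π (ℓ + 1) * h ^ (ℓ + 1) + π (ℓ + 1) * h ^ (ℓ + 1) * (ℓ : ℝ≥0∞) := by ring
            _ ≤ π (ℓ + 1) * h ^ (ℓ + 1) + (ℓ : ℝ≥0∞) * π (ℓ + 1) := by
                refine add_le_add_right ?_ _
                calc π (ℓ + 1) * h ^ (ℓ + 1) * (ℓ : ℝ≥0∞)
                    ≤ π (ℓ + 1) * 1 * (ℓ : ℝ≥0∞) :=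
                      mul_le_mul_left (mul_le_mul_right (pow_le_one' hh _) _) _
                  _ = (ℓ : ℝ≥0∞) * π (ℓ + 1) := by ring
      _ = (∑' ℓ : ℕ, π (ℓ + 1) * h ^ (ℓ + 1)) + ∑' ℓ : ℕ, (ℓ : ℝ≥0∞) * π (ℓ + 1) :=
          ENNReal.tsum_add
      _ = π 0 + ∑' ℓ : ℕ, π (ℓ + 1) * h ^ (ℓ + 1) := by
          rw [S1_eq π hsum hmean, add_comm]
  have hAC : A + C = ((k : ℝ≥0∞) + 1) * B := by
    rw [hA, hC, ← ENNReal.tsum_add]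
    rw [hB, ← ENNReal.tsum_mul_left]
    refine tsum_congr fun ℓ => ?_
    have hnat : (((k + 1) - ℓ : ℕ) : ℝ≥0∞) + ((min ℓ (k + 1) : ℕ) : ℝ≥0∞)
        = ((k : ℝ≥0∞) + 1) := by
      rw [← Nat.cast_add, show ((k + 1) - ℓ) + (min ℓ (k + 1)) = k + 1 from by omega]
      push_cast; ring
    calc π ℓ * (h ^ ℓ * (((k + 1) - ℓ : ℕ) : ℝ≥0∞)) +
          π ℓ * (h ^ ℓ * ((min ℓ (k + 1) : ℕ) : ℝ≥0∞))
        = π ℓ * h ^ ℓ * ((((k + 1) - ℓ : ℕ) : ℝ≥0∞) + ((min ℓ (k + 1) : ℕ) : ℝ≥0∞)) := by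
          ring
      _ = π ℓ * h ^ ℓ * ((k : ℝ≥0∞) + 1) := by rw [hnat]
      _ = ((k : ℝ≥0∞) + 1) * (π ℓ * h ^ ℓ) := by ring
  have hCtop : C ≠ ⊤ := ne_top_of_le_ne_top ENNReal.one_ne_top (le_trans hCB hBle)
  have : (k : ℝ≥0∞) * B + C ≤ A + C := by
    calc (k : ℝ≥0∞) * B + C ≤ (k : ℝ≥0∞) * B + B := add_le_add_right hCB _
      _ = ((k : ℝ≥0∞) + 1) * B := by ring
      _ = A + C := hAC.symm
  exact (WithTop.add_le_add_iff_right hCtop).1 this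

/-- The gambler's-ruin estimate: `k · h_n ≤ (k+1) · q_n(k)`. -/
lemma q_claim (hsum : ∑' i : ℕ, π i = 1) (hmean : ∑' i : ℕ, (i : ℝ≥0∞) * π i = 1) :
    ∀ n k : ℕ, (k : ℝ≥0∞) * hseq π n ≤ ((k : ℝ≥0∞) + 1) * qseq π n k := by
  intro n
  induction n with
  | zero => intro k; simp
  | succ n ih =>
    intro k
    rcases Nat.eq_zero_or_pos k with rfl | hk
    · simp
    have hh : hseq π n ≤ 1 := hseq_le_one π hsum n
    have hprod : ∀ ℓ : ℕ, hseq π n ^ ℓ * (((k + 1) - ℓ : ℕ) : ℝ≥0∞) ≤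
        ((k : ℝ≥0∞) + 1) * ∏ j ∈ Finset.range ℓ, qseq π n (k - j) := by
      intro ℓ
      induction ℓ with
      | zero => simp
      | succ ℓ ihl =>
        rcases le_or_gt (ℓ + 1) k with hle | hgt
        · have hcast : (((k + 1) - (ℓ + 1) : ℕ) : ℝ≥0∞) = ((k - ℓ : ℕ) : ℝ≥0∞) := by
            congr 1; omega
          have hcast2 : (((k - ℓ : ℕ) : ℝ≥0∞) + 1) = (((k + 1) - ℓ : ℕ) : ℝ≥0∞) := by
            rw [show ((k + 1) - ℓ) = (k - ℓ) + 1 from by omega]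
            push_cast; ring
          calc hseq π n ^ (ℓ + 1) * (((k + 1) - (ℓ + 1) : ℕ) : ℝ≥0∞)
              = hseq π n ^ ℓ * (((k - ℓ : ℕ) : ℝ≥0∞) * hseq π n) := by
                rw [hcast, pow_succ]; ring
            _ ≤ hseq π n ^ ℓ * ((((k - ℓ : ℕ) : ℝ≥0∞) + 1) * qseq π n (k - ℓ)) :=
                mul_le_mul_right (ih (k - ℓ)) _
            _ = (hseq π n ^ ℓ * (((k + 1) - ℓ : ℕ) : ℝ≥0∞)) * qseq π n (k - ℓ) := by
                rw [← hcast2]; ring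
            _ ≤ (((k : ℝ≥0∞) + 1) * ∏ j ∈ Finset.range ℓ, qseq π n (k - j)) *
                  qseq π n (k - ℓ) := mul_le_mul_left ihl _
            _ = ((k : ℝ≥0∞) + 1) * ∏ j ∈ Finset.range (ℓ + 1), qseq π n (k - j) := by
                rw [Finset.prod_range_succ]; ring
        · have : ((k + 1) - (ℓ + 1) : ℕ) = 0 := by omega
          rw [this, Nat.cast_zero, mul_zero]
          exact zero_le
    calc (k : ℝ≥0∞) * hseq π (n + 1)
        = (k : ℝ≥0∞) * ∑' ℓ : ℕ, π ℓ * hseq π n ^ ℓ := by rw [hseq_succ]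
      _ ≤ ∑' ℓ : ℕ, π ℓ * (hseq π n ^ ℓ * (((k + 1) - ℓ : ℕ) : ℝ≥0∞)) :=
          A_ge_kB π hsum hmean hh k
      _ ≤ ∑' ℓ : ℕ, π ℓ * (((k : ℝ≥0∞) + 1) * ∏ j ∈ Finset.range ℓ, qseq π n (k - j)) :=
          ENNReal.tsum_le_tsum fun ℓ => mul_le_mul_right (hprod ℓ) _
      _ = ((k : ℝ≥0∞) + 1) * ∑' ℓ : ℕ, π ℓ * ∏ j ∈ Finset.range ℓ, qseq π n (k - j) := by
          rw [← ENNReal.tsum_mul_left]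
          exact tsum_congr fun ℓ => by ring
      _ = ((k : ℝ≥0∞) + 1) * qseq π (n + 1) k := by rw [qseq_succ π n k hk]

lemma one_sub_pow {h : ℝ≥0∞} (hh : h ≤ 1) :
    ∀ ℓ : ℕ, 1 - h ^ ℓ = (1 - h) * ∑ j ∈ Finset.range ℓ, h ^ j := by
  intro ℓ
  induction ℓ with
  | zero => simp
  | succ ℓ ihl =>
    have hp1 : h ^ ℓ ≤ 1 := pow_le_one' hh ℓ
    have hp2 : h ^ (ℓ + 1) ≤ h ^ ℓ := by
      rw [pow_succ]
      calc h ^ ℓ * h ≤ h ^ ℓ * 1 := mul_le_mul_right hh _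
        _ = h ^ ℓ := mul_one _
    have key : 1 - h ^ (ℓ + 1) = (1 - h ^ ℓ) + (h ^ ℓ - h ^ (ℓ + 1)) :=
      (tsub_add_tsub_cancel hp1 hp2).symm
    have key2 : h ^ ℓ - h ^ (ℓ + 1) = h ^ ℓ * (1 - h) := by
      rw [ENNReal.mul_sub (fun _ _ => ne_top_of_le_ne_top ENNReal.one_ne_top hp1),
        mul_one, ← pow_succ]
    rw [key, key2, ihl, Finset.sum_range_succ]
    ring

/-- The key step inequality for the height tail. -/
lemma e_rec (hsum : ∑' i : ℕ, π i = 1) (hmean : ∑' i : ℕ, (i : ℝ≥0∞) * π i = 1) (n : ℕ) :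
    (1 - hseq π (n + 1)) + (delta π * (1 - hseq π n)) * (1 - hseq π (n + 1))
      ≤ 1 - hseq π n := by
  set h := hseq π n with hdef
  have hh : h ≤ 1 := hseq_le_one π hsum n
  set e : ℝ≥0∞ := 1 - h with he
  set s : ℝ≥0∞ := ∑' ℓ : ℕ, π ℓ * ∑ j ∈ Finset.range ℓ, h ^ j with hs
  -- (a) hseq (n+1) + e * s = 1
  have hes : e * s = ∑' ℓ : ℕ, π ℓ * (1 - h ^ ℓ) := by
    rw [hs, ← ENNReal.tsum_mul_left]
    exact tsum_congr fun ℓ => by rw [one_sub_pow hh ℓ]; ring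
  have ha : hseq π (n + 1) + e * s = 1 := by
    have hterm0 : ∀ ℓ : ℕ, π ℓ * h ^ ℓ + π ℓ * (1 - h ^ ℓ) = π ℓ := fun ℓ => by
      rw [← mul_add, add_tsub_cancel_of_le (pow_le_one' hh ℓ), mul_one]
    rw [hes, hseq_succ, ← hdef, ← ENNReal.tsum_add, tsum_congr hterm0, hsum]
  -- (b) 1 - hseq (n+1) = e * s
  have hb : 1 - hseq π (n + 1) = e * s := by
    have hfin : hseq π (n + 1) ≠ ⊤ :=
      ne_top_of_le_ne_top ENNReal.one_ne_top (hseq_le_one π hsum (n + 1))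
    refine ENNReal.sub_eq_of_eq_add hfin ?_
    rw [add_comm, ha]
  -- (c) s + delta * e ≤ 1
  have hde : delta π * e = ∑' ℓ : ℕ, π (ℓ + 2) * e := by
    rw [delta, ← ENNReal.tsum_mul_right]
  have hterm : ∀ ℓ : ℕ, π (ℓ + 2) * ∑ j ∈ Finset.range (ℓ + 2), h ^ j + π (ℓ + 2) * e
      ≤ ((ℓ : ℝ≥0∞) + 2) * π (ℓ + 2) := by
    intro ℓ
    rw [← mul_add]
    have hσ : (∑ j ∈ Finset.range (ℓ + 2), h ^ j) + e ≤ (ℓ : ℝ≥0∞) + 2 := by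
      rw [Finset.sum_range_succ' (fun j => h ^ j) (ℓ + 1),
        Finset.sum_range_succ' (fun j => h ^ (j + 1)) ℓ]
      simp only [pow_zero, zero_add, pow_one]
      have hsum_le : ∑ j ∈ Finset.range ℓ, h ^ (j + 1 + 1) ≤ (ℓ : ℝ≥0∞) := by
        calc ∑ j ∈ Finset.range ℓ, h ^ (j + 1 + 1) ≤ ∑ _j ∈ Finset.range ℓ, 1 :=
              Finset.sum_le_sum fun j _ => pow_le_one' hh _
          _ = (ℓ : ℝ≥0∞) := by simp
      have hhe : h + e = 1 := by
        rw [he, add_tsub_cancel_of_le hh]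
      calc ∑ j ∈ Finset.range ℓ, h ^ (j + 1 + 1) + h + 1 + e
          = (∑ j ∈ Finset.range ℓ, h ^ (j + 1 + 1)) + (h + e) + 1 := by ring
        _ = (∑ j ∈ Finset.range ℓ, h ^ (j + 1 + 1)) + 2 := by rw [hhe]; ring
        _ ≤ (ℓ : ℝ≥0∞) + 2 := add_le_add_left hsum_le _
    calc π (ℓ + 2) * ((∑ j ∈ Finset.range (ℓ + 2), h ^ j) + e)
        ≤ π (ℓ + 2) * ((ℓ : ℝ≥0∞) + 2) := mul_le_mul_right hσ _
      _ = ((ℓ : ℝ≥0∞) + 2) * π (ℓ + 2) := mul_comm _ _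
  have hs2 : s = π 1 + ∑' ℓ : ℕ, π (ℓ + 2) * ∑ j ∈ Finset.range (ℓ + 2), h ^ j := by
    rw [hs, tsum_eq_zero_add' (f := fun ℓ : ℕ => π ℓ * ∑ j ∈ Finset.range ℓ, h ^ j)
      ENNReal.summable]
    rw [tsum_eq_zero_add' (f := fun ℓ : ℕ => π (ℓ + 1) * ∑ j ∈ Finset.range (ℓ + 1), h ^ j)
      ENNReal.summable]
    simp
  have hc : s + delta π * e ≤ 1 := by
    calc s + delta π * e
        = π 1 + ∑' ℓ : ℕ, (π (ℓ + 2) * ∑ j ∈ Finset.range (ℓ + 2), h ^ j + π (ℓ + 2) * e) := by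
          rw [hs2, hde, ENNReal.tsum_add]; ring
      _ ≤ π 1 + ∑' ℓ : ℕ, ((ℓ : ℝ≥0∞) + 2) * π (ℓ + 2) :=
          add_le_add_right (ENNReal.tsum_le_tsum hterm) _
      _ = 1 := S2_eq π hmean
  -- (d) conclude
  have hsle : s ≤ 1 := le_trans le_self_add hc
  rw [hb]
  calc e * s + (delta π * e) * (e * s)
      = e * (s + delta π * e * s) := by ring
    _ ≤ e * (s + delta π * e * 1) :=
        mul_le_mul_right (add_le_add_right (mul_le_mul_right hsle _) _) _
    _ = e * (s + delta π * e) := by rw [mul_one]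
    _ ≤ e * 1 := mul_le_mul_right hc _
    _ = e := mul_one _

lemma hseq_ne_top (hsum : ∑' i : ℕ, π i = 1) (n : ℕ) : hseq π n ≠ ⊤ :=
  ne_top_of_le_ne_top ENNReal.one_ne_top (hseq_le_one π hsum n)

lemma x_claim (hsum : ∑' i : ℕ, π i = 1) (hmean : ∑' i : ℕ, (i : ℝ≥0∞) * π i = 1) :
    ∀ n : ℕ, (1 - hseq π n).toReal * (n * (delta π).toReal + 1) ≤ 1 := by
  have hdtop : delta π ≠ ⊤ := ne_top_of_le_ne_top ENNReal.one_ne_top (delta_le_one π hsum)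
  have hd0 : 0 ≤ (delta π).toReal := ENNReal.toReal_nonneg
  have hd1 : (delta π).toReal ≤ 1 := by
    calc (delta π).toReal ≤ (1 : ℝ≥0∞).toReal :=
          ENNReal.toReal_mono ENNReal.one_ne_top (delta_le_one π hsum)
      _ = 1 := ENNReal.toReal_one
  have hx1 : ∀ n, (1 - hseq π n).toReal ≤ 1 := fun n => by
    calc (1 - hseq π n).toReal ≤ (1 : ℝ≥0∞).toReal :=
          ENNReal.toReal_mono ENNReal.one_ne_top tsub_le_self
      _ = 1 := ENNReal.toReal_one
  have hx0 : ∀ n, 0 ≤ (1 - hseq π n).toReal := fun n => ENNReal.toReal_nonneg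
  have hetop : ∀ n, (1 - hseq π n) ≠ ⊤ :=
    fun n => ne_top_of_le_ne_top ENNReal.one_ne_top tsub_le_self
  have hrec : ∀ n, (1 - hseq π (n + 1)).toReal +
      (delta π).toReal * (1 - hseq π n).toReal * (1 - hseq π (n + 1)).toReal ≤
      (1 - hseq π n).toReal := by
    intro n
    have h1 := e_rec π hsum hmean n
    have h2 := ENNReal.toReal_mono (hetop n) h1
    rw [ENNReal.toReal_add (hetop (n + 1))
      (ENNReal.mul_ne_top (ENNReal.mul_ne_top hdtop (hetop n)) (hetop (n + 1))),
      ENNReal.toReal_mul, ENNReal.toReal_mul] at h2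
    exact h2
  intro n
  induction n with
  | zero => simpa using hx1 0
  | succ n ihn =>
    set d := (delta π).toReal
    set u := (1 - hseq π (n + 1)).toReal
    set v := (1 - hseq π n).toReal
    have hA : 0 ≤ 1 - v * (n * d + 1) := by linarith [ihn]
    have hB : 0 ≤ v - u - d * v * u := by linarith [hrec n]
    have hC : 0 ≤ 1 - d * u := by nlinarith [hx1 (n + 1), hx0 (n + 1)]
    have hnd : (0 : ℝ) ≤ n * d + 1 := by positivity
    have hgoal : u * ((n : ℝ) * d + d + 1) ≤ 1 := by
      nlinarith [mul_nonneg hA hC, mul_nonneg hB hnd]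
    calc u * (((n : ℕ) + 1 : ℕ) * d + 1) = u * ((n : ℝ) * d + d + 1) := by push_cast; ring
      _ ≤ 1 := hgoal

lemma htail_eq (hsum : ∑' i : ℕ, π i = 1) (hZ : ∑' t : PlaneTree, gwWeight π t = 1) (k : ℕ) :
    ∑' t : PlaneTree, (if ¬ heightLt k t then gwWeight π t else 0) = 1 - hseq π k := by
  have hadd : hseq π k + ∑' t : PlaneTree, (if ¬ heightLt k t then gwWeight π t else 0) = 1 := by
    rw [hseq, ← ENNReal.tsum_add, ← hZ]
    refine tsum_congr fun t => ?_
    rw [hfun]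
    by_cases h : heightLt k t <;> simp [h]
  rw [eq_comm]
  exact ENNReal.sub_eq_of_eq_add (hseq_ne_top π hsum k) (by rw [add_comm] at hadd; exact hadd.symm)

lemma wtail_le (hsum : ∑' i : ℕ, π i = 1) (hmean : ∑' i : ℕ, (i : ℝ≥0∞) * π i = 1)
    (hZ : ∑' t : PlaneTree, gwWeight π t = 1) (k : ℕ) :
    ((k : ℝ≥0∞) + 1) * ∑' t : PlaneTree, (if ¬ wLt k t then gwWeight π t else 0) ≤ 1 := by
  set wt := ∑' t : PlaneTree, (if ¬ wLt k t then gwWeight π t else 0) with hwt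
  set qq := ∑' t : PlaneTree, (if wLt k t then gwWeight π t else 0) with hqq
  have hadd : qq + wt = 1 := by
    rw [hqq, hwt, ← ENNReal.tsum_add, ← hZ]
    refine tsum_congr fun t => ?_
    by_cases h : wLt k t <;> simp [h]
  have hqn : ∀ n, qseq π n k ≤ qq :=
    fun n => ENNReal.tsum_le_tsum fun t => by
      rw [qfun]
      split
      · rw [if_pos (by tauto)]
      · exact zero_le
  have hsup : (⨆ n, hseq π n) = 1 := (iSup_hseq_eq_Z π).trans hZ
  have hkqq : (k : ℝ≥0∞) ≤ ((k : ℝ≥0∞) + 1) * qq := by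
    calc (k : ℝ≥0∞) = (k : ℝ≥0∞) * ⨆ n, hseq π n := by rw [hsup, mul_one]
      _ = ⨆ n, (k : ℝ≥0∞) * hseq π n := ENNReal.mul_iSup _ _
      _ ≤ ((k : ℝ≥0∞) + 1) * qq := iSup_le fun n =>
          le_trans (q_claim π hsum hmean n k) (mul_le_mul_right (hqn n) _)
  have hkey : (k : ℝ≥0∞) + ((k : ℝ≥0∞) + 1) * wt ≤ (k : ℝ≥0∞) + 1 := by
    calc (k : ℝ≥0∞) + ((k : ℝ≥0∞) + 1) * wt
        ≤ ((k : ℝ≥0∞) + 1) * qq + ((k : ℝ≥0∞) + 1) * wt := add_le_add_left hkqq _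
      _ = ((k : ℝ≥0∞) + 1) * (qq + wt) := by ring
      _ = (k : ℝ≥0∞) + 1 := by rw [hadd, mul_one]
  exact (WithTop.add_le_add_iff_left (ENNReal.natCast_ne_top k)).1 hkey

end PlaneTree
end Analysis

open PlaneTree MeasureTheory ProbabilityTheory in
/-- Let `τ` be a Galton–Watson tree with critical offspring distribution `ξ ~ π`
(`E ξ = 1`, `ξ` not identically `1`).  Then there is `c > 0` such that for all `m ≥ 2`,
`P(height(Loop(τ)) ≥ m) ≤ c/m`. -/
theorem stmt2 {Ω : Type*} [MeasureSpace Ω] [IsProbabilityMeasure (ℙ : Measure Ω)]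
    (π : ℕ → ENNReal) (hsum : ∑' i : ℕ, π i = 1)
    (hmean : ∑' i : ℕ, (i : ENNReal) * π i = 1)
    (hnotone : π 1 < 1)
    (τ : Ω → PlaneTree)
    (hlaw : ∀ t : PlaneTree, ℙ {ω | τ ω = t} = gwWeight π t) :
    ∃ c : ℝ, 0 < c ∧ ∀ m : ℕ, 2 ≤ m →
      (ℙ {ω | m ≤ loopHeight (τ ω)}).toReal ≤ c / m := by
  classical
  -- total mass of the GW weights is 1
  have hZ1 : (1 : ENNReal) ≤ ∑' t : PlaneTree, gwWeight π t := by
    have hcover : (Set.univ : Set Ω) ⊆ ⋃ t : PlaneTree, {ω | τ ω = t} :=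
      fun ω _ => Set.mem_iUnion.2 ⟨τ ω, rfl⟩
    calc (1 : ENNReal) = ℙ (Set.univ : Set Ω) := measure_univ.symm
      _ ≤ ℙ (⋃ t : PlaneTree, {ω | τ ω = t}) := measure_mono hcover
      _ ≤ ∑' t : PlaneTree, ℙ {ω | τ ω = t} := measure_iUnion_le _
      _ = ∑' t : PlaneTree, gwWeight π t := tsum_congr hlaw
  have hZ2 : ∑' t : PlaneTree, gwWeight π t ≤ 1 := by
    rw [← iSup_hseq_eq_Z]
    exact iSup_le (hseq_le_one π hsum)
  have hZ : ∑' t : PlaneTree, gwWeight π t = 1 := le_antisymm hZ2 hZ1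
  set d : ℝ := (delta π).toReal with hd
  have hd0 : 0 < d := ENNReal.toReal_pos (delta_pos π hmean hnotone).ne'
    (ne_top_of_le_ne_top ENNReal.one_ne_top (delta_le_one π hsum))
  refine ⟨4 / d + 4, by positivity, ?_⟩
  intro m hm
  set k : ℕ := m / 2 with hk
  have hk1 : 1 ≤ k := by omega
  have hkpos : (0 : ℝ) < k := by exact_mod_cast hk1
  have hm4 : (m : ℝ) ≤ 4 * k := by
    have : m ≤ 4 * k := by omega
    exact_mod_cast this
  have hmpos : (0 : ℝ) < m := by
    have : 0 < m := by omega
    exact_mod_cast this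
  -- event inclusion
  have hincl : {ω | m ≤ loopHeight (τ ω)} ⊆
      {ω | ¬ heightLt k (τ ω)} ∪ {ω | ¬ wLt k (τ ω)} := by
    intro ω hω
    rcases loopHeight_large hm hω with h | h
    · exact Or.inl h
    · exact Or.inr h
  -- bound tree-events by tail sums
  have hbound : ∀ P : PlaneTree → Prop, ℙ {ω | ¬ P (τ ω)} ≤
      ∑' t : PlaneTree, (if ¬ P t then gwWeight π t else 0) := by
    intro P
    have hsub : {ω | ¬ P (τ ω)} ⊆ ⋃ t : {t : PlaneTree // ¬ P t}, {ω | τ ω = t.1} :=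
      fun ω hω => Set.mem_iUnion.2 ⟨⟨τ ω, hω⟩, rfl⟩
    calc ℙ {ω | ¬ P (τ ω)} ≤ ∑' t : {t : PlaneTree // ¬ P t}, ℙ {ω | τ ω = t.1} :=
          le_trans (measure_mono hsub) (measure_iUnion_le _)
      _ = ∑' t : {t : PlaneTree // ¬ P t}, gwWeight π t.1 := tsum_congr fun t => hlaw t.1
      _ = ∑' t : PlaneTree, Set.indicator {t | ¬ P t} (gwWeight π) t :=
          tsum_subtype {t : PlaneTree | ¬ P t} (gwWeight π)
      _ = ∑' t : PlaneTree, (if ¬ P t then gwWeight π t else 0) :=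
          tsum_congr fun t => by by_cases h : ¬ P t <;> simp [Set.indicator, h]
  set HT : ENNReal := ∑' t : PlaneTree, (if ¬ heightLt k t then gwWeight π t else 0) with hHT
  set WT : ENNReal := ∑' t : PlaneTree, (if ¬ wLt k t then gwWeight π t else 0) with hWT
  have hHTval : HT = 1 - hseq π k := htail_eq π hsum hZ k
  have hHTtop : HT ≠ ⊤ := by
    rw [hHTval]
    exact ne_top_of_le_ne_top ENNReal.one_ne_top tsub_le_self
  have hWTle : ((k : ENNReal) + 1) * WT ≤ 1 := wtail_le π hsum hmean hZ k
  have hWTtop : WT ≠ ⊤ := by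
    intro h
    rw [h] at hWTle
    simp [ENNReal.mul_top, ENNReal.add_eq_top] at hWTle
  -- probability bound in ENNReal
  have hPle : ℙ {ω | m ≤ loopHeight (τ ω)} ≤ HT + WT := by
    calc ℙ {ω | m ≤ loopHeight (τ ω)}
        ≤ ℙ ({ω | ¬ heightLt k (τ ω)} ∪ {ω | ¬ wLt k (τ ω)}) := measure_mono hincl
      _ ≤ ℙ {ω | ¬ heightLt k (τ ω)} + ℙ {ω | ¬ wLt k (τ ω)} := measure_union_le _ _
      _ ≤ HT + WT := add_le_add (hbound _) (hbound _)
  -- convert to reals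
  have hPreal : (ℙ {ω | m ≤ loopHeight (τ ω)}).toReal ≤ HT.toReal + WT.toReal := by
    calc (ℙ {ω | m ≤ loopHeight (τ ω)}).toReal ≤ (HT + WT).toReal :=
          ENNReal.toReal_mono (by finiteness) hPle
      _ = HT.toReal + WT.toReal := ENNReal.toReal_add hHTtop hWTtop
  -- bound HT.toReal
  have hHTreal : HT.toReal ≤ 1 / (k * d) := by
    have hx := x_claim π hsum hmean k
    rw [← hHTval] at hx
    have hpos : (0 : ℝ) < k * d + 1 := by positivity
    have h1 : HT.toReal ≤ 1 / (k * d + 1) := by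
      rw [le_div_iff₀ hpos]
      exact hx
    calc HT.toReal ≤ 1 / (k * d + 1) := h1
      _ ≤ 1 / (k * d) := by
        apply one_div_le_one_div_of_le (by positivity)
        linarith
  -- bound WT.toReal
  have hWTreal : WT.toReal ≤ 1 / (k : ℝ) := by
    have h1 : WT ≤ 1 / ((k : ENNReal) + 1) := by
      rw [ENNReal.le_div_iff_mul_le (Or.inl (by simp)) (Or.inl (by simp))]
      rw [mul_comm]
      exact hWTle
    have hne : (1 : ENNReal) / ((k : ENNReal) + 1) ≠ ⊤ := by
      simp [ENNReal.div_eq_top]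
    have h2 : WT.toReal ≤ (1 / ((k : ENNReal) + 1)).toReal :=
      ENNReal.toReal_mono hne h1
    have h3 : (1 / ((k : ENNReal) + 1)).toReal = 1 / ((k : ℝ) + 1) := by
      rw [ENNReal.toReal_div, ENNReal.toReal_one,
        ENNReal.toReal_add (ENNReal.natCast_ne_top k) ENNReal.one_ne_top,
        ENNReal.toReal_natCast, ENNReal.toReal_one]
    rw [h3] at h2
    calc WT.toReal ≤ 1 / ((k : ℝ) + 1) := h2
      _ ≤ 1 / (k : ℝ) := by
        apply one_div_le_one_div_of_le hkpos
        linarith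
  -- final arithmetic
  have hfin : 1 / (k * d) + 1 / (k : ℝ) ≤ (4 / d + 4) / m := by
    have e1 : 1 / (k * d) ≤ (4 / d) / m := by
      rw [div_le_div_iff₀ (by positivity) hmpos]
      calc 1 * (m : ℝ) = m := one_mul _
        _ ≤ 4 * k := hm4
        _ ≤ 4 / d * (k * d) := by
          rw [div_mul_eq_mul_div, le_div_iff₀ hd0]
          ring_nf
          nlinarith [hkpos, hd0]
    have e2 : 1 / (k : ℝ) ≤ 4 / m := by
      rw [div_le_div_iff₀ hkpos hmpos]
      linarith
    calc 1 / (k * d) + 1 / (k : ℝ) ≤ (4 / d) / m + 4 / m := add_le_add e1 e2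
      _ = (4 / d + 4) / m := by rw [← add_div]
  linarith
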